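/- There exist a positive integer N and real samples z₁, …, z_N such that the Cauchy location likelihood equation Σ_{k=1}^N 2(z_k − γ)/(1 + (z_k − γ)²) = 0 (with σ = 1) has more than one real solution γ. -/
import Mathlib


theorem cauchy_likelihood_equation_multiple_roots :
    ∃ (N : ℕ), 0 < N ∧ ∃ (z : Fin N → ℝ) (γ₁ γ₂ : ℝ), γ₁ ≠ γ₂ ∧
      (∑ k, 2 * (z k - γ₁) / (1 + (z k - γ₁) ^ 2) = 0) ∧
      (∑ k, 2 * (z k - γ₂) / (1 + (z k - γ₂) ^ 2) = 0) := by
  refine ⟨2, by norm_num, ![Real.sqrt 2, -Real.sqrt 2], 0, 1, by norm_num, ?_, ?_⟩ <;>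
  · have h2 : Real.sqrt 2 ^ 2 = 2 := Real.sq_sqrt (by norm_num)
    rw [Fin.sum_univ_two]
    simp only [Matrix.cons_val_zero, Matrix.cons_val_one, Matrix.head_cons]
    have ha : (1 + (Real.sqrt 2 - 0) ^ 2) ≠ 0 := by nlinarith
    have hb : (1 + (-Real.sqrt 2 - 0) ^ 2) ≠ 0 := by nlinarith
    have hc : (1 + (Real.sqrt 2 - 1) ^ 2) ≠ 0 := by nlinarith
    have hd : (1 + (-Real.sqrt 2 - 1) ^ 2) ≠ 0 := by nlinarith
    field_simp
    try nlinarith [h2]
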